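/- The normalized imaginary-time evolved state satisfies the nonlinear imaginary-time Schrödinger equation: let M be a Hermitian complex d×d matrix and ψ₀ ∈ ℂ^d with ψ₀ ≠ 0. Define ψ(t) = ‖exp(-t • M) ψ₀‖⁻¹ • (exp(-t • M) ψ₀) (well-defined since exp(-t • M) is invertible). Then ψ is differentiable and ψ'(t) = -(M (ψ(t))) + Re⟪ψ(t), M ψ(t)⟫ • ψ(t), i.e., dψ/dt + (M - ⟨M⟩(t)) ψ = 0 with ⟨M⟩(t) = Re⟪ψ(t), M ψ(t)⟫. -/

import Mathlib

open Matrix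

/-- Interpret a tuple `Fin d → ℂ` as a vector in `ℂ^d = EuclideanSpace ℂ (Fin d)`. -/
def toEuc (d : ℕ) : (Fin d → ℂ) → EuclideanSpace ℂ (Fin d) := fun x => WithLp.toLp 2 x

open NormedSpace

attribute [local instance] Matrix.linftyOpNormedRing Matrix.linftyOpNormedAlgebra

theorem imaginaryTime_schrodinger (d : ℕ) (hd : 1 ≤ d)
    (M : Matrix (Fin d) (Fin d) ℂ) (hM : Mᴴ = M)
    (ψ₀ : EuclideanSpace ℂ (Fin d)) (hψ₀ : ψ₀ ≠ 0)
    (ψ : ℝ → EuclideanSpace ℂ (Fin d))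
    (hψ : ∀ t : ℝ, ψ t =
      ‖toEuc d ((NormedSpace.exp (-t • M)).mulVec ψ₀)‖⁻¹ •
        toEuc d ((NormedSpace.exp (-t • M)).mulVec ψ₀))
    (t : ℝ) :
    HasDerivAt ψ
      (-(toEuc d (M.mulVec (ψ t))) +
        (inner ℂ (ψ t) (toEuc d (M.mulVec (ψ t))) : ℂ).re • ψ t) t := by
  classical
  set A : Matrix (Fin d) (Fin d) ℂ := -M with hA
  have hexp : ∀ s : ℝ, exp (-s • M) = exp (s • A) := by
    intro s
    congr 1
    rw [hA, smul_neg, neg_smul]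
  set φ : ℝ → EuclideanSpace ℂ (Fin d) := fun s => toEuc d ((exp (s • A)).mulVec ψ₀)
    with hφdef
  have hψφ : ψ = fun s => ‖φ s‖⁻¹ • φ s := by
    funext s
    rw [hψ s, hexp s]
  -- φ never vanishes
  have hφne : ∀ s : ℝ, φ s ≠ 0 := by
    intro s hs
    apply hψ₀
    have h1 : exp (-(s • A)) * exp (s • A) = 1 := by
      have := exp_add_of_commute (Commute.refl (s • A)).neg_left
      rw [neg_add_cancel, exp_zero] at this
      exact this.symm
    have : (exp (-(s • A)) * exp (s • A)).mulVec ψ₀ = 0 := by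
      rw [← Matrix.mulVec_mulVec]
      have hz : (exp (s • A)).mulVec ψ₀ = 0 := by simpa [hφdef, toEuc] using congrArg WithLp.ofLp hs
      rw [hz]
      simp [Matrix.mulVec_zero]
    rw [h1, Matrix.one_mulVec] at this
    simpa using this
  have hnt : ‖φ t‖ ≠ 0 := norm_ne_zero_iff.mpr (hφne t)
  have hntpos : (0:ℝ) < ‖φ t‖ := norm_pos_iff.mpr (hφne t)
  -- derivative of the matrix exponential
  have hE : HasDerivAt (fun s : ℝ => exp (s • A)) (exp (t • A) * A) t :=
    hasDerivAt_exp_smul_const A t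
  -- linear map B ↦ B.mulVec ψ₀
  let L : Matrix (Fin d) (Fin d) ℂ →ₗ[ℝ] EuclideanSpace ℂ (Fin d) :=
    { toFun := fun B => toEuc d (B.mulVec ψ₀)
      map_add' := fun B C => by
        show toEuc d ((B + C).mulVec ψ₀) = toEuc d (B.mulVec ψ₀) + toEuc d (C.mulVec ψ₀)
        ext i
        simp [toEuc, Matrix.add_mulVec]
      map_smul' := fun r B => by
        show toEuc d ((r • B).mulVec ψ₀) = r • toEuc d (B.mulVec ψ₀)
        ext i
        simp [toEuc, Matrix.smul_mulVec] }
  have hφ0 : HasDerivAt φ (toEuc d ((exp (t • A) * A).mulVec ψ₀)) t := by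
    have := (LinearMap.toContinuousLinearMap L).hasFDerivAt.comp_hasDerivAt t hE
    exact this
  have hcomm : A * exp (t • A) = exp (t • A) * A :=
    ((Commute.refl A).smul_right t).exp_right
  have hDφ : toEuc d ((exp (t • A) * A).mulVec ψ₀) = -(toEuc d (M.mulVec (φ t))) := by
    rw [← hcomm, ← Matrix.mulVec_mulVec, hA, Matrix.neg_mulVec]
    rfl
  rw [hDφ] at hφ0
  set Dφ : EuclideanSpace ℂ (Fin d) := -(toEuc d (M.mulVec (φ t))) with hDφdef
  -- derivative of s ↦ re ⟪φ s, φ s⟫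
  have hq : HasDerivAt (fun s => (inner ℂ (φ s) (φ s) : ℂ))
      (inner ℂ (φ t) Dφ + inner ℂ Dφ (φ t)) t := HasDerivAt.inner (𝕜 := ℂ) hφ0 hφ0
  have hr : HasDerivAt (fun s => (inner ℂ (φ s) (φ s) : ℂ).re)
      ((inner ℂ (φ t) Dφ + inner ℂ Dφ (φ t) : ℂ).re) t :=
    Complex.reCLM.hasFDerivAt.comp_hasDerivAt t hq
  have hrtnorm : ∀ s, (inner ℂ (φ s) (φ s) : ℂ).re = ‖φ s‖ ^ 2 := fun s => by
    simpa using inner_self_eq_norm_sq (𝕜 := ℂ) (φ s)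
  have hrtne : (inner ℂ (φ t) (φ t) : ℂ).re ≠ 0 := by
    rw [hrtnorm]
    positivity
  -- derivative of s ↦ ‖φ s‖
  have hsq : HasDerivAt (fun s => Real.sqrt ((inner ℂ (φ s) (φ s) : ℂ).re))
      ((inner ℂ (φ t) Dφ + inner ℂ Dφ (φ t) : ℂ).re /
        (2 * Real.sqrt ((inner ℂ (φ t) (φ t) : ℂ).re))) t := hr.sqrt hrtne
  have hfun : (fun s => Real.sqrt ((inner ℂ (φ s) (φ s) : ℂ).re)) = fun s => ‖φ s‖ := by
    funext s
    rw [hrtnorm, Real.sqrt_sq (norm_nonneg _)]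
  have hsqrt_t : Real.sqrt ((inner ℂ (φ t) (φ t) : ℂ).re) = ‖φ t‖ := by
    rw [hrtnorm, Real.sqrt_sq (norm_nonneg _)]
  rw [hfun, hsqrt_t] at hsq
  set r' : ℝ := (inner ℂ (φ t) Dφ + inner ℂ Dφ (φ t) : ℂ).re with hr'def
  -- derivative of s ↦ ‖φ s‖⁻¹
  have hinv : HasDerivAt (fun s => ‖φ s‖⁻¹)
      (-(r' / (2 * ‖φ t‖)) / ‖φ t‖ ^ 2) t := hsq.inv hnt
  -- product rule
  have hfinal : HasDerivAt (fun s => ‖φ s‖⁻¹ • φ s)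
      (‖φ t‖⁻¹ • Dφ + (-(r' / (2 * ‖φ t‖)) / ‖φ t‖ ^ 2) • φ t) t := hinv.smul hφ0
  rw [← hψφ] at hfinal
  convert hfinal using 1
  -- now prove the algebraic identity
  have hψt : ψ t = ‖φ t‖⁻¹ • φ t := by rw [hψφ]
  have hMψ : toEuc d (M.mulVec (ψ t)) = ‖φ t‖⁻¹ • toEuc d (M.mulVec (φ t)) := by
    rw [hψt]
    rw [WithLp.ofLp_smul, Matrix.mulVec_smul]
    rfl
  have hr'val : r' = -(2 * (inner ℂ (φ t) (toEuc d (M.mulVec (φ t))) : ℂ).re) := by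
    rw [hr'def, hDφdef]
    have h2 : (inner ℂ (-(toEuc d (M.mulVec (φ t)))) (φ t) : ℂ) =
        -(starRingEnd ℂ) (inner ℂ (φ t) (toEuc d (M.mulVec (φ t)))) := by
      rw [inner_neg_left, inner_conj_symm]
    rw [h2]
    simp [inner_neg_right]
    have h3 : (inner ℂ (toEuc d (M.mulVec (φ t))) (φ t) : ℂ).re =
        (inner ℂ (φ t) (toEuc d (M.mulVec (φ t))) : ℂ).re := by
      rw [← inner_conj_symm, Complex.conj_re]
    rw [h3]
    ring
  have hinner : (inner ℂ (ψ t) (toEuc d (M.mulVec (ψ t))) : ℂ).re =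
      ‖φ t‖⁻¹ * ‖φ t‖⁻¹ * (inner ℂ (φ t) (toEuc d (M.mulVec (φ t))) : ℂ).re := by
    rw [hMψ, hψt]
    rw [RCLike.real_smul_eq_coe_smul (K := ℂ) (‖φ t‖⁻¹) (φ t),
      RCLike.real_smul_eq_coe_smul (K := ℂ) (‖φ t‖⁻¹) (toEuc d (M.mulVec (φ t)))]
    rw [inner_smul_left, inner_smul_right]
    simp [Complex.mul_re]
    ring
  rw [hinner, hMψ, hψt, hr'val, hDφdef]
  set c : ℝ := (inner ℂ (φ t) (toEuc d (M.mulVec (φ t))) : ℂ).re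
  have harith : -(-(2 * c) / (2 * ‖φ t‖)) / ‖φ t‖ ^ 2 = ‖φ t‖⁻¹ * ‖φ t‖⁻¹ * c * ‖φ t‖⁻¹ := by
    field_simp
  simp only [smul_neg, smul_smul]
  rw [harith]
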